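/- Let R = ⟨G,(s₀,t₀),C*⟩ be a scenario on a path with s₀ ≤ t₀, where C* = {(s₁,t₁),…,(s_h,t_h)} is in normal form (t_i < s_i for all i, s_i < t_{i+1} for all i < h) and s₀ ≤ t₁, s_h ≤ t₀. Then the ride s₀ ↦ s₁ ↦ t₁ ↦ s₂ ↦ t₂ ↦ … ↦ s_h ↦ t_h ↦ t₀ (concatenation of shortest monotone segments) is an optimal ride for R. -/

import Mathlib

namespace RideSharing

/-- A ride in a graph with adjacency `adj`: a nonempty sequence of nodes where
consecutive nodes are adjacent. -/
def IsRide (adj : ℕ → ℕ → Prop) (π : List ℕ) : Prop :=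
  π ≠ [] ∧ π.Chain' adj

/-- The cost of a ride: sum of the weights of traversed edges. -/
def cost (w : ℕ → ℕ → ℚ) : List ℕ → ℚ
  | [] => 0
  | [_] => 0
  | a :: b :: rest => w a b + cost w (b :: rest)

/-- A ride satisfies a request `(s,t)` if `s` occurs at a time step weakly before
an occurrence of `t`. -/
def Satisfies (π : List ℕ) (s t : ℕ) : Prop :=
  ∃ i j : ℕ, i ≤ j ∧ π[i]? = some s ∧ π[j]? = some t

/-- `Pre π' π` : `π'` is obtained from `π` by (repeatedly) removing a contiguous
subsequence of nodes (the relation `π' ⪯ π` of the paper, stated with 0-based indices: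
`π[1,i] , π[i',len]` becomes `π.take (i+1) ++ π.drop i'`). -/
inductive Pre : List ℕ → List ℕ → Prop
  | refl (π : List ℕ) : Pre π π
  | step (π' π : List ℕ) (i i' : ℕ) :
      i < i' → i' < π.length →
      (π[i + 1]? = π[i']? ∨ π[i]? = π[i' - 1]?) →
      Pre π' (π.take (i + 1) ++ π.drop i') → Pre π' π

/-- A ride-sharing scenario. -/
structure Scenario where
  adj : ℕ → ℕ → Prop
  w : ℕ → ℕ → ℚ
  s0 : ℕ
  t0 : ℕ
  C : Finset (ℕ × ℕ)

def Feasible (R : Scenario) (π : List ℕ) : Prop :=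
  IsRide R.adj π ∧ π.head? = some R.s0 ∧ π.getLast? = some R.t0 ∧
    ∀ r ∈ R.C, Satisfies π r.1 r.2

def Optimal (R : Scenario) (π : List ℕ) : Prop :=
  Feasible R π ∧ ∀ π', Feasible R π' → cost R.w π ≤ cost R.w π'

/-- The set `V_C` of endpoints of requests. -/
def VC (C : Finset (ℕ × ℕ)) : Finset ℕ := C.image Prod.fst ∪ C.image Prod.snd

/-- The path graph on `{1,…,n}`. -/
def pathAdj (n : ℕ) (a b : ℕ) : Prop :=
  (b = a + 1 ∨ a = b + 1) ∧ 1 ≤ a ∧ a ≤ n ∧ 1 ≤ b ∧ b ≤ n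

/-- The monotone segment of the path from `x` to `y`. -/
def seg (x y : ℕ) : List ℕ :=
  if x ≤ y then (List.range (y - x + 1)).map (fun k => x + k)
  else (List.range (x - y + 1)).map (fun k => x - k)

/-- The ride through a list of waypoints, concatenating monotone segments. -/
def rideThrough : List ℕ → List ℕ
  | [] => []
  | [x] => [x]
  | x :: y :: rest => seg x y ++ (rideThrough (y :: rest)).tail

/-- Concatenation of rides (`π ↦ π'`), inserting the monotone connecting segment
if the endpoints differ. -/
def rconcat (a b : List ℕ) : List ℕ :=
  a ++ (seg (a.getLastD 0) (b.headD 0)).tail ++ b.tail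




/-- indicator that the step from `a` to `b` crosses edge `(e,e+1)` -/
def eind (a b e : ℕ) : ℕ := if (a = e ∧ b = e+1) ∨ (a = e+1 ∧ b = e) then 1 else 0

def cc (π : List ℕ) (e : ℕ) : ℕ :=
  ∑ k ∈ Finset.range (π.length - 1), eind π[k]! π[k+1]! e

lemma cc_nil (e : ℕ) : cc [] e = 0 := rfl

lemma cc_single (x e : ℕ) : cc [x] e = 0 := rfl

lemma cc_cons (x : ℕ) (l : List ℕ) (hl : l ≠ []) (e : ℕ) :
    cc (x :: l) e = eind x l[0]! e + cc l e := by
  have h1 : (x :: l).length - 1 = (l.length - 1) + 1 := by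
    cases l with
    | nil => simp at hl
    | cons a t => simp
  rw [cc, h1, Finset.sum_range_succ']
  simp only [List.getElem!_cons_succ, List.getElem!_cons_zero]
  rw [add_comm]
  rfl

lemma chain_step (l : List ℕ) (R : ℕ → ℕ → Prop) (h : l.Chain' R) (k : ℕ)
    (hk : k + 1 < l.length) : R l[k]! l[k+1]! := by
  unfold List.Chain' at h
  rw [List.isChain_iff_getElem] at h
  have := h k (by omega)
  rw [getElem!_pos l k (by omega), getElem!_pos l (k+1) hk]
  simpa using this

lemma cross_up (n : ℕ) (π : List ℕ) (hc : π.Chain' (pathAdj n)) (e : ℕ) :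
    ∀ d k1 k2, k2 - k1 ≤ d → k1 ≤ k2 → k2 < π.length → π[k1]! ≤ e → e < π[k2]! →
    ∃ k, k1 ≤ k ∧ k < k2 ∧ π[k]! = e ∧ π[k+1]! = e + 1 := by
  intro d
  induction d with
  | zero =>
    intro k1 k2 hd h12 h2 hlo hhi
    have : k1 = k2 := by omega
    subst this; omega
  | succ d ih =>
    intro k1 k2 hd h12 h2 hlo hhi
    have hne : k1 ≠ k2 := by rintro rfl; omega
    have h1lt : k1 < k2 := by omega
    have hstep := chain_step π _ hc k1 (by omega)
    obtain ⟨hpm, -⟩ := hstep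
    by_cases hcase : π[k1+1]! ≤ e
    · obtain ⟨k, hk1, hk2, hk3, hk4⟩ := ih (k1+1) k2 (by omega) (by omega) h2 hcase hhi
      exact ⟨k, by omega, hk2, hk3, hk4⟩
    · push_neg at hcase
      refine ⟨k1, le_refl _, h1lt, ?_, ?_⟩ <;> omega

lemma cross_down (n : ℕ) (π : List ℕ) (hc : π.Chain' (pathAdj n)) (e : ℕ) :
    ∀ d k1 k2, k2 - k1 ≤ d → k1 ≤ k2 → k2 < π.length → e < π[k1]! → π[k2]! ≤ e →
    ∃ k, k1 ≤ k ∧ k < k2 ∧ π[k]! = e + 1 ∧ π[k+1]! = e := by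
  intro d
  induction d with
  | zero =>
    intro k1 k2 hd h12 h2 hlo hhi
    have : k1 = k2 := by omega
    subst this; omega
  | succ d ih =>
    intro k1 k2 hd h12 h2 hlo hhi
    have hne : k1 ≠ k2 := by rintro rfl; omega
    have h1lt : k1 < k2 := by omega
    have hstep := chain_step π _ hc k1 (by omega)
    obtain ⟨hpm, -⟩ := hstep
    by_cases hcase : e < π[k1+1]!
    · obtain ⟨k, hk1, hk2, hk3, hk4⟩ := ih (k1+1) k2 (by omega) (by omega) h2 hcase hhi
      exact ⟨k, by omega, hk2, hk3, hk4⟩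
    · push_neg at hcase
      refine ⟨k1, le_refl _, h1lt, ?_, ?_⟩ <;> omega

lemma cc_ge (π : List ℕ) (e : ℕ) (S : Finset ℕ)
    (hS : ∀ k ∈ S, k + 1 < π.length ∧ eind π[k]! π[k+1]! e = 1) :
    S.card ≤ cc π e := by
  calc S.card = ∑ k ∈ S, 1 := by simp
  _ = ∑ k ∈ S, eind π[k]! π[k+1]! e := by
      apply Finset.sum_congr rfl; intro k hk; exact ((hS k hk).2).symm
  _ ≤ cc π e := by
      apply Finset.sum_le_sum_of_subset
      intro k hk
      rw [Finset.mem_range]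
      exact Nat.lt_of_lt_of_le (by have := (hS k hk).1; omega) (le_refl _)

lemma cost_eq (n : ℕ) (w : ℕ → ℕ → ℚ) (hwsym : ∀ a b, w a b = w b a) :
    ∀ π : List ℕ, π.Chain' (pathAdj n) →
    cost w π = ∑ a ∈ Finset.range n, (cc π a : ℚ) * w a (a+1) := by
  intro π
  induction π with
  | nil => intro _; simp [cost, cc]
  | cons x l ih =>
    intro hc
    cases l with
    | nil => simp [cost, cc]
    | cons y r =>
      simp only [List.Chain', List.isChain_cons_cons] at hc
      obtain ⟨hxy, hc'⟩ := hc
      have ihr := ih hc'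
      have hcons := cc_cons x (y :: r) (by simp)
      rw [cost]
      rw [ihr]
      have key : w x y = ∑ a ∈ Finset.range n, (eind x y a : ℚ) * w a (a+1) := by
        obtain ⟨hpm, hx1, hxn, hy1, hyn⟩ := hxy
        rcases hpm with h | h
        · -- y = x + 1
          subst h
          rw [Finset.sum_eq_single x]
          · have he : eind x (x+1) x = 1 := by simp [eind]
            rw [he]; simp
          · intro b _ hbx
            have : eind x (x+1) b = 0 := by
              simp only [eind, ite_eq_right_iff]
              intro hcontra; rcases hcontra with ⟨h1,h2⟩|⟨h1,h2⟩ <;> omega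
            simp [this]
          · intro hx; exfalso; rw [Finset.mem_range] at hx; omega
        · -- x = y + 1
          subst h
          rw [Finset.sum_eq_single y]
          · have he : eind (y+1) y y = 1 := by simp [eind]
            rw [he]
            simpa using hwsym (y+1) y
          · intro b _ hby
            have : eind (y+1) y b = 0 := by
              simp only [eind, ite_eq_right_iff]
              intro hcontra; rcases hcontra with ⟨h1,h2⟩|⟨h1,h2⟩ <;> omega
            simp [this]
          · intro hy; exfalso; rw [Finset.mem_range] at hy; omega
      rw [key, ← Finset.sum_add_distrib]
      apply Finset.sum_congr rfl
      intro a _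
      rw [hcons a]
      push_cast
      ring_nf
      rw [List.getElem!_cons_zero]
      ring



lemma seg_self (x : ℕ) : seg x x = [x] := by
  simp [seg, List.range_succ]

lemma seg_up (x y : ℕ) (h : x < y) : seg x y = x :: seg (x+1) y := by
  rw [seg, if_pos (le_of_lt h), seg, if_pos (by omega)]
  have h1 : y - x + 1 = (y - (x+1) + 1) + 1 := by omega
  rw [h1, List.range_succ_eq_map, List.map_cons]
  simp only [add_zero, List.map_map]
  congr 1
  apply List.map_congr_left
  intro k _
  simp [Nat.succ_eq_add_one]
  omega

lemma seg_down (x y : ℕ) (h : y < x) : seg x y = x :: seg (x-1) y := by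
  rw [seg, if_neg (by omega)]
  have h1 : x - y + 1 = ((x-1) - y + 1) + 1 := by omega
  rw [h1, List.range_succ_eq_map, List.map_cons]
  by_cases h2 : x - 1 ≤ y
  · -- then x - 1 = y
    have h3 : x - 1 = y := by omega
    rw [seg, if_pos h2]
    simp only [Nat.sub_zero]
    have : (x-1) - y = 0 := by omega
    rw [this]
    simp [List.range_succ_eq_map, h3]
  · rw [seg, if_neg h2]
    simp only [Nat.sub_zero, List.map_map]
    congr 1
    apply List.map_congr_left
    intro k _
    simp [Nat.succ_eq_add_one]
    omega

lemma seg_ne_nil (x y : ℕ) : seg x y ≠ [] := by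
  rw [seg]
  split <;> simp

lemma seg_head (x y : ℕ) : (seg x y).head? = some x := by
  rw [seg]
  split
  · have : y - x + 1 = (y-x) + 1 := rfl
    rw [this, List.range_succ_eq_map]
    simp
  · have : x - y + 1 = (x-y) + 1 := rfl
    rw [this, List.range_succ_eq_map]
    simp

lemma seg_getLast (x y : ℕ) : (seg x y).getLast? = some y := by
  rw [seg]
  split
  · next hle =>
    rw [List.range_succ]
    simp [Nat.add_sub_cancel' hle]
  · next hle =>
    rw [List.range_succ]
    simp
    omega

lemma cc_seg (e : ℕ) : ∀ d x y, max x y - min x y ≤ d →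
    cc (seg x y) e = if min x y ≤ e ∧ e < max x y then 1 else 0 := by
  intro d
  induction d with
  | zero =>
    intro x y hd
    have : x = y := by omega
    subst this
    rw [seg_self, cc_single]
    rw [if_neg (by omega)]
  | succ d ih =>
    intro x y hd
    rcases Nat.lt_trichotomy x y with h | h | h
    · rw [seg_up x y h, cc_cons _ _ (seg_ne_nil _ _)]
      have h0 : (seg (x+1) y)[0]! = x + 1 := by
        have := seg_head (x+1) y
        cases hsg : seg (x+1) y with
        | nil => exact absurd hsg (seg_ne_nil _ _)
        | cons a t => rw [hsg] at this; simp at this; simp [this]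
      rw [h0, ih (x+1) y (by omega)]
      simp only [eind]
      by_cases he : x = e
      · subst he
        rw [if_pos (Or.inl ⟨rfl, rfl⟩), if_neg (by omega), if_pos (by omega)]
      · rw [if_neg (by omega)]
        by_cases h2 : min (x+1) y ≤ e ∧ e < max (x+1) y
        · rw [if_pos h2, if_pos (by omega)]
        · rw [if_neg h2, if_neg (by omega)]
    · subst h
      rw [seg_self, cc_single, if_neg (by omega)]
    · rw [seg_down x y h, cc_cons _ _ (seg_ne_nil _ _)]
      have h0 : (seg (x-1) y)[0]! = x - 1 := by
        have := seg_head (x-1) y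
        cases hsg : seg (x-1) y with
        | nil => exact absurd hsg (seg_ne_nil _ _)
        | cons a t => rw [hsg] at this; simp at this; simp [this]
      rw [h0, ih (x-1) y (by omega)]
      simp only [eind]
      by_cases he : x = e + 1
      · rw [if_pos (Or.inr ⟨he, by omega⟩), if_neg (by omega), if_pos (by omega)]
      · rw [if_neg (by omega)]
        by_cases h2 : min (x-1) y ≤ e ∧ e < max (x-1) y
        · rw [if_pos h2, if_pos (by omega)]
        · rw [if_neg h2, if_neg (by omega)]

lemma seg_chain (n : ℕ) (e : ℕ) : ∀ d x y, max x y - min x y ≤ d →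
    1 ≤ x → x ≤ n → 1 ≤ y → y ≤ n → (seg x y).Chain' (pathAdj n) := by
  intro d
  induction d with
  | zero =>
    intro x y hd _ _ _ _
    have : x = y := by omega
    subst this
    rw [seg_self]; simp [List.Chain']
  | succ d ih =>
    intro x y hd hx1 hxn hy1 hyn
    rcases Nat.lt_trichotomy x y with h | h | h
    · rw [seg_up x y h]
      have hch := ih (x+1) y (by omega) (by omega) (by omega) hy1 hyn
      cases hsg : seg (x+1) y with
      | nil => exact absurd hsg (seg_ne_nil _ _)
      | cons a t =>
        have ha : a = x + 1 := by
          have := seg_head (x+1) y; rw [hsg] at this; simpa using this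
        simp only [List.Chain', List.isChain_cons_cons]
        refine ⟨⟨Or.inl ha, hx1, hxn, by omega, by rw [ha]; omega⟩, ?_⟩
        rw [← hsg]; exact hch
    · subst h; rw [seg_self]; simp [List.Chain']
    · rw [seg_down x y h]
      have hch := ih (x-1) y (by omega) (by omega) (by omega) hy1 hyn
      cases hsg : seg (x-1) y with
      | nil => exact absurd hsg (seg_ne_nil _ _)
      | cons a t =>
        have ha : a = x - 1 := by
          have := seg_head (x-1) y; rw [hsg] at this; simpa using this
        simp only [List.Chain', List.isChain_cons_cons]
        refine ⟨⟨Or.inr (by omega), hx1, hxn, by omega, by omega⟩, ?_⟩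
        rw [← hsg]; exact hch




lemma rt_ne_nil (W : List ℕ) (h : W ≠ []) : rideThrough W ≠ [] := by
  cases W with
  | nil => simp at h
  | cons x l =>
    cases l with
    | nil => simp [rideThrough]
    | cons y r =>
      rw [rideThrough]
      intro hc
      exact seg_ne_nil x y (List.append_eq_nil_iff.mp hc).1

lemma rt_head (W : List ℕ) (h : W ≠ []) : (rideThrough W).head? = W.head? := by
  cases W with
  | nil => simp at h
  | cons x l =>
    cases l with
    | nil => simp [rideThrough]
    | cons y r =>
      rw [rideThrough, List.head?_append_of_ne_nil _ (seg_ne_nil x y)]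
      rw [seg_head]
      simp

lemma rt_cons₂ (x y : ℕ) (r : List ℕ) :
    rideThrough (x :: y :: r) = (seg x y).dropLast ++ rideThrough (y :: r) := by
  rw [rideThrough]
  have h1 : seg x y = (seg x y).dropLast ++ [y] := by
    conv_lhs => rw [← List.dropLast_append_getLast (seg_ne_nil x y)]
    congr 1
    have := seg_getLast x y
    rw [List.getLast?_eq_getLast (seg_ne_nil x y)] at this
    simp at this
    rw [this]
  have h2 : rideThrough (y :: r) = y :: (rideThrough (y :: r)).tail := by
    have hne := rt_ne_nil (y :: r) (by simp)
    have hh := rt_head (y :: r) (by simp)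
    cases hrt : rideThrough (y :: r) with
    | nil => exact absurd hrt hne
    | cons a t => rw [hrt] at hh; simp at hh; simp [hh]
  conv_lhs => rw [h1]
  conv_rhs => rw [h2]
  simp

lemma rt_getLast (W : List ℕ) (h : W ≠ []) : (rideThrough W).getLast? = W.getLast? := by
  induction W with
  | nil => simp at h
  | cons x l ih =>
    cases l with
    | nil => simp [rideThrough]
    | cons y r =>
      rw [rt_cons₂]
      rw [List.getLast?_append_of_ne_nil _ (rt_ne_nil (y :: r) (by simp))]
      rw [ih (by simp)]
      simp

lemma rt_mem (W : List ℕ) (z : ℕ) (h : z ∈ W) : z ∈ rideThrough W := by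
  induction W with
  | nil => simp at h
  | cons x l ih =>
    cases l with
    | nil => simp at h; simp [rideThrough, h]
    | cons y r =>
      rw [rt_cons₂]
      rcases List.mem_cons.mp h with h | h
      · subst h
        have hh := rt_head (z :: y :: r) (by simp)
        rw [rt_cons₂] at hh
        have := List.mem_of_mem_head? (l := (seg z y).dropLast ++ rideThrough (y :: r)) (a := z)
        apply this
        rw [hh]
        simp
      · exact List.mem_append_right _ (ih h)

lemma satisfies_append_left (u v : List ℕ) (x y : ℕ) (h : Satisfies v x y) :
    Satisfies (u ++ v) x y := by
  obtain ⟨i, j, hij, hi, hj⟩ := h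
  refine ⟨u.length + i, u.length + j, by omega, ?_, ?_⟩
  · rw [List.getElem?_append_right (by omega)]
    simpa using hi
  · rw [List.getElem?_append_right (by omega)]
    simpa using hj

lemma head_mem_satisfies (l : List ℕ) (x y : ℕ) (hh : l.head? = some x) (hm : y ∈ l) :
    Satisfies l x y := by
  obtain ⟨j, hj, hyj⟩ := List.mem_iff_getElem.mp hm
  refine ⟨0, j, by omega, ?_, ?_⟩
  · cases l with
    | nil => simp at hh
    | cons a t => simp at hh; simp [hh]
  · rw [List.getElem?_eq_getElem hj, hyj]

lemma rt_sat (x y : ℕ) : ∀ U V : List ℕ, Satisfies (rideThrough (U ++ x :: y :: V)) x y := by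
  intro U
  induction U with
  | nil =>
    intro V
    simp only [List.nil_append]
    apply head_mem_satisfies
    · rw [rt_head _ (by simp)]; simp
    · exact rt_mem _ y (by simp)
  | cons u U' ih =>
    intro V
    have : u :: U' ++ x :: y :: V = u :: (U' ++ x :: y :: V) := by simp
    rw [this]
    cases hU : U' ++ x :: y :: V with
    | nil => simp at hU
    | cons a t =>
      rw [rt_cons₂]
      rw [← hU]
      exact satisfies_append_left _ _ _ _ (ih V)

lemma cc_glue (e : ℕ) : ∀ (l₁ l₂ : List ℕ), l₁ ≠ [] → l₂ ≠ [] →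
    l₁.getLast? = l₂.head? → cc (l₁ ++ l₂.tail) e = cc l₁ e + cc l₂ e := by
  intro l₁
  induction l₁ with
  | nil => intro l₂ h; simp at h
  | cons z l ih =>
    intro l₂ h1 h2 hend
    cases l with
    | nil =>
      simp only [List.getLast?_singleton] at hend
      cases l₂ with
      | nil => simp at h2
      | cons b t =>
        simp at hend
        subst hend
        simp only [List.tail_cons, List.singleton_append, cc_single]
        omega
    | cons wz r =>
      have hend' : (wz :: r).getLast? = l₂.head? := by
        rw [← hend]; simp [List.getLast?_cons_cons]
      have hne2 : (wz :: r) ++ l₂.tail ≠ [] := by simp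
      have step : (z :: wz :: r) ++ l₂.tail = z :: ((wz :: r) ++ l₂.tail) := by simp
      rw [step, cc_cons _ _ hne2, ih l₂ (by simp) h2 hend', cc_cons z (wz :: r) (by simp)]
      have : ((wz :: r) ++ l₂.tail)[0]! = wz := by simp
      rw [this]
      simp only [List.getElem!_cons_zero]
      omega

lemma chain_glue (R : ℕ → ℕ → Prop) (l₁ l₂ : List ℕ) (h1 : l₁.Chain' R) (h2 : l₂.Chain' R)
    (hend : l₁.getLast? = l₂.head?) : (l₁ ++ l₂.tail).Chain' R := by
  simp only [List.Chain', List.isChain_append]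
  refine ⟨h1, List.IsChain.tail h2, ?_⟩
  intro a ha b hb
  cases l₂ with
  | nil => simp at hb
  | cons c t =>
    cases t with
    | nil => simp at hb
    | cons d t' =>
      simp at hb
      simp at ha
      have hc : a = c := by
        rw [hend] at ha; simp at ha; omega
      subst hc; subst hb
      exact (List.isChain_cons_cons.mp h2).1

lemma rt_chain (n : ℕ) : ∀ W : List ℕ, (∀ z ∈ W, 1 ≤ z ∧ z ≤ n) →
    (rideThrough W).Chain' (pathAdj n) := by
  intro W
  induction W with
  | nil => intro _; simp [rideThrough, List.Chain']
  | cons x l ih =>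
    intro hb
    cases l with
    | nil => simp [rideThrough, List.Chain']
    | cons y r =>
      rw [rideThrough]
      apply chain_glue
      · apply seg_chain n 0 (max x y - min x y) x y (le_refl _)
        · exact (hb x (by simp)).1
        · exact (hb x (by simp)).2
        · exact (hb y (by simp)).1
        · exact (hb y (by simp)).2
      · exact ih (fun z hz => hb z (List.mem_cons_of_mem _ hz))
      · rw [seg_getLast, rt_head _ (by simp)]; simp

lemma cc_rt (e : ℕ) : ∀ W : List ℕ, ∀ x y r, W = x :: y :: r →
    cc (rideThrough W) e = cc (seg x y) e + cc (rideThrough (y :: r)) e := by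
  intro W x y r hW
  subst hW
  rw [rideThrough]
  apply cc_glue e (seg x y) (rideThrough (y :: r)) (seg_ne_nil x y) (rt_ne_nil _ (by simp))
  rw [seg_getLast, rt_head _ (by simp)]
  simp


def segind (x y e : ℕ) : ℕ := if min x y ≤ e ∧ e < max x y then 1 else 0

def pcount (e : ℕ) : List ℕ → ℕ
  | [] => 0
  | [_] => 0
  | x :: y :: r => segind x y e + pcount e (y :: r)

lemma st_mono (h : ℕ) (s t : ℕ → ℕ) (hrl : ∀ i, i < h → t i < s i)
    (hsep : ∀ i, i + 1 < h → s i < t (i + 1)) :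
    ∀ j, j < h → ∀ i, i ≤ j → s i ≤ s j ∧ t i ≤ t j := by
  intro j
  induction j with
  | zero =>
    intro _ i hi
    have : i = 0 := by omega
    subst this; exact ⟨le_refl _, le_refl _⟩
  | succ j ihj =>
    intro hj i hi
    rcases Nat.lt_or_ge i (j+1) with h' | h'
    · have hij : i ≤ j := by omega
      obtain ⟨hs, ht⟩ := ihj (by omega) i hij
      have h1 := hsep j (by omega)
      have h2 := hrl j (by omega)
      have h3 := hrl (j+1) hj
      constructor <;> omega
    · have : i = j + 1 := by omega
      subst this; exact ⟨le_refl _, le_refl _⟩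

lemma cnt (a : ℕ) : ∀ (h : ℕ) (s t : ℕ → ℕ) (x T : ℕ), 0 < h →
    (∀ i, i < h → t i < s i) → (∀ i, i + 1 < h → s i < t (i + 1)) →
    x ≤ t 0 → s (h - 1) ≤ T →
    pcount a (x :: ((List.range h).flatMap (fun i => [s i, t i]) ++ [T])) =
      if ∃ i, i < h ∧ t i ≤ a ∧ a < s i then 3 else if x ≤ a ∧ a < T then 1 else 0 := by
  intro h
  induction h with
  | zero => intro s t x T hh; omega
  | succ h ih =>
    intro s t x T _ hrl hsep hx hT
    have hrl0 : t 0 < s 0 := hrl 0 (by omega)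
    have hs0T : s 0 ≤ T := by
      have := (st_mono (h+1) s t hrl hsep h (by omega) 0 (by omega)).1
      simpa using le_trans this (by simpa using hT)
    -- unfold the front of the bind
    rw [List.range_succ_eq_map]
    have hunf : ((0 :: List.map Nat.succ (List.range h)).flatMap fun i => [s i, t i])
        = [s 0, t 0] ++ ((List.range h).flatMap fun i => [s (i+1), t (i+1)]) := by
      simp only [List.flatMap_cons, List.flatMap_map]
    rw [hunf]
    have hW : ([s 0, t 0] ++ (List.range h).flatMap fun i => [s (i+1), t (i+1)]) ++ [T]
        = s 0 :: t 0 :: ((List.range h).flatMap fun i => [s (i+1), t (i+1)]) ++ [T] := by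
      simp
    rcases Nat.eq_zero_or_pos h with hz | hpos
    · subst hz
      simp only [List.range_zero, List.flatMap_nil]
      have hex : (∃ i, i < 0 + 1 ∧ t i ≤ a ∧ a < s i) ↔ (t 0 ≤ a ∧ a < s 0) := by
        constructor
        · rintro ⟨i, hi, h1, h2⟩
          have : i = 0 := by omega
          subst this; exact ⟨h1, h2⟩
        · intro hp; exact ⟨0, by omega, hp⟩
      simp only [List.nil_append, List.append_nil]
      show segind x (s 0) a + (segind (s 0) (t 0) a + (segind (t 0) T a + 0)) = _
      by_cases hd : t 0 ≤ a ∧ a < s 0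
      · rw [if_pos (hex.mpr hd)]
        simp only [segind]
        split_ifs <;> omega
      · rw [if_neg (fun hc => hd (hex.mp hc))]
        simp only [segind]
        split_ifs <;> omega
    · have hsep0 : s 0 < t 1 := hsep 0 (by omega)
      have step : pcount a (x :: (([s 0, t 0] ++ (List.range h).flatMap fun i => [s (i+1), t (i+1)]) ++ [T]))
          = segind x (s 0) a + (segind (s 0) (t 0) a +
            pcount a (t 0 :: (((List.range h).flatMap fun i => [s (i+1), t (i+1)]) ++ [T]))) := by
        rw [hW]
        rfl
      rw [step]
      have hIH : pcount a (t 0 :: (((List.range h).flatMap fun i => [s (i+1), t (i+1)]) ++ [T]))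
          = if ∃ i, i < h ∧ t (i+1) ≤ a ∧ a < s (i+1) then 3
            else if t 0 ≤ a ∧ a < T then 1 else 0 := by
        have := ih (fun i => s (i+1)) (fun i => t (i+1)) (t 0) T hpos
          (fun i hi => hrl (i+1) (by omega)) (fun i hi => hsep (i+1) (by omega))
          (le_of_lt (lt_trans hrl0 hsep0))
          (show s (h - 1 + 1) ≤ T by
            have h' : h - 1 + 1 = h := by omega
            rw [h']; exact hT)
        simpa using this
      rw [hIH]
      by_cases hA : ∃ i, i < h ∧ t (i+1) ≤ a ∧ a < s (i+1)
      · obtain ⟨i, hi, hA1, hA2⟩ := hA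
        have ht1 : t 1 ≤ t (i+1) :=
          (st_mono (h+1) s t hrl hsep (i+1) (by omega) 1 (by omega)).2
        rw [if_pos (show ∃ i, i < h ∧ t (i+1) ≤ a ∧ a < s (i+1) from ⟨i, hi, hA1, hA2⟩)]
        rw [if_pos (show ∃ i, i < h + 1 ∧ t i ≤ a ∧ a < s i from ⟨i+1, by omega, hA1, hA2⟩)]
        simp only [segind]
        split_ifs <;> omega
      · rw [if_neg hA]
        by_cases hB : t 0 ≤ a ∧ a < s 0
        · rw [if_pos (show ∃ i, i < h + 1 ∧ t i ≤ a ∧ a < s i from ⟨0, by omega, hB.1, hB.2⟩)]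
          simp only [segind]
          split_ifs <;> omega
        · have hnotex : ¬ ∃ i, i < h + 1 ∧ t i ≤ a ∧ a < s i := by
            rintro ⟨i, hi, h1', h2'⟩
            rcases Nat.eq_zero_or_pos i with rfl | hip
            · exact hB ⟨h1', h2'⟩
            · refine hA ⟨i - 1, by omega, ?_, ?_⟩ <;>
                · have h' : i - 1 + 1 = i := by omega
                  rw [h']; assumption
          rw [if_neg hnotex]
          simp only [segind]
          split_ifs <;> omega


lemma getbang {l : List ℕ} {k v : ℕ} (hl : l[k]? = some v) : k < l.length ∧ l[k]! = v := by
  rcases List.getElem?_eq_some_iff.mp hl with ⟨h1, h2⟩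
  exact ⟨h1, by rw [getElem!_pos l k h1]; exact h2⟩

lemma cc_rt_pcount (e : ℕ) : ∀ W : List ℕ, cc (rideThrough W) e = pcount e W := by
  intro W
  induction W with
  | nil => rfl
  | cons x l ih =>
    cases l with
    | nil => rfl
    | cons y r =>
      rw [cc_rt e _ x y r rfl, cc_seg e (max x y - min x y) x y (le_refl _), ih]
      rfl

/-- for a normal-form set of requests `{(s₁,t₁),…,(s_h,t_h)}` with
`s₀ ≤ t₁` and `s_h ≤ t₀`, the ride `s₀ ↦ s₁ ↦ t₁ ↦ … ↦ s_h ↦ t_h ↦ t₀` is optimal. -/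
theorem normal_form_canonical_optimal (n : ℕ) (w : ℕ → ℕ → ℚ)
    (hwpos : ∀ a b, 0 < w a b) (hwsym : ∀ a b, w a b = w b a)
    (s0 t0 : ℕ) (h : ℕ) (s t : ℕ → ℕ) (hh : 0 < h)
    (hrl : ∀ i, i < h → t i < s i)
    (hsep : ∀ i, i + 1 < h → s i < t (i + 1))
    (hfirst : s0 ≤ t 0) (hlast : s (h - 1) ≤ t0)
    (h1 : 1 ≤ s0) (h2 : t0 ≤ n) :
    Optimal ⟨pathAdj n, w, s0, t0, (Finset.range h).image (fun i => (s i, t i))⟩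
      (rideThrough (s0 :: (((List.range h).flatMap (fun i => [s i, t i])) ++ [t0]))) := by
  set W : List ℕ := s0 :: (((List.range h).flatMap (fun i => [s i, t i])) ++ [t0]) with hWdef
  have hmono := st_mono h s t hrl hsep
  have hf1 : ∀ i, i < h → t 0 ≤ t i := fun i hi => (hmono i hi 0 (by omega)).2
  have hf2 : ∀ i, i < h → s i ≤ s (h-1) := fun i hi => (hmono (h-1) (by omega) i (by omega)).1
  have hf3 : ∀ i, i < h → s i ≤ t0 := fun i hi => le_trans (hf2 i hi) hlast
  have hf4 : ∀ i, i < h → 1 ≤ t i := fun i hi => le_trans h1 (le_trans hfirst (hf1 i hi))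
  have ht0pos : 1 ≤ t0 := le_trans (hf4 (h-1) (by omega))
    (le_trans (le_of_lt (hrl (h-1) (by omega))) hlast)
  have hs0n : s0 ≤ n := le_trans hfirst (le_trans (hf1 (h-1) (by omega))
    (le_trans (le_of_lt (hrl (h-1) (by omega))) (le_trans hlast h2)))
  have hbound : ∀ z ∈ W, 1 ≤ z ∧ z ≤ n := by
    intro z hz
    rw [hWdef] at hz
    rcases List.mem_cons.mp hz with rfl | hz
    · exact ⟨h1, hs0n⟩
    · rcases List.mem_append.mp hz with hz | hz
      · obtain ⟨i, hi, hzi⟩ := List.mem_flatMap.mp hz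
        rw [List.mem_range] at hi
        have hzz : z = s i ∨ z = t i := by simpa using hzi
        rcases hzz with rfl | rfl
        · exact ⟨le_trans (hf4 i hi) (le_of_lt (hrl i hi)), le_trans (hf3 i hi) h2⟩
        · exact ⟨hf4 i hi, le_trans (le_of_lt (hrl i hi)) (le_trans (hf3 i hi) h2)⟩
      · have : z = t0 := by simpa using hz
        subst this
        exact ⟨ht0pos, h2⟩
  have hWne : W ≠ [] := by rw [hWdef]; simp
  have hπne := rt_ne_nil W hWne
  have hchain := rt_chain n W hbound
  have hhead : (rideThrough W).head? = some s0 := by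
    rw [rt_head W hWne, hWdef]; rfl
  have hlast' : (rideThrough W).getLast? = some t0 := by
    rw [rt_getLast W hWne, hWdef]
    rw [show s0 :: (((List.range h).flatMap (fun i => [s i, t i])) ++ [t0])
        = (s0 :: ((List.range h).flatMap (fun i => [s i, t i]))) ++ [t0] from rfl]
    rw [List.getLast?_concat]
  have hsat : ∀ i, i < h → Satisfies (rideThrough W) (s i) (t i) := by
    intro i hi
    obtain ⟨U, V, hUV⟩ : ∃ U V, W = U ++ s i :: t i :: V := by
      have hr : List.range h = List.range i ++ List.map (fun x => i + x) (List.range (h - i)) := by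
        rw [← List.range_add]; congr 1; omega
      have hr2 : List.range (h - i) = 0 :: List.map Nat.succ (List.range (h - i - 1)) := by
        rw [← List.range_succ_eq_map]; congr 1; omega
      refine ⟨s0 :: ((List.range i).flatMap (fun j => [s j, t j])),
        ((List.map (fun x => i + x) (List.map Nat.succ (List.range (h - i - 1)))).flatMap
          (fun j => [s j, t j])) ++ [t0], ?_⟩
      rw [hWdef, hr, hr2]
      simp [List.flatMap_append, List.flatMap_cons]
    rw [hUV]
    exact rt_sat (s i) (t i) U V
  constructor
  · refine ⟨⟨hπne, hchain⟩, hhead, hlast', ?_⟩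
    intro r hr
    obtain ⟨i, hi, rfl⟩ := Finset.mem_image.mp hr
    rw [Finset.mem_range] at hi
    exact hsat i hi
  · intro π' hfeas'
    obtain ⟨⟨hne', hchain'⟩, hhead', hlast2, hsatC'⟩ := hfeas'
    show cost w (rideThrough W) ≤ cost w π'
    rw [cost_eq n w hwsym _ hchain, cost_eq n w hwsym _ hchain']
    apply Finset.sum_le_sum
    intro a _
    have hccπ : cc (rideThrough W) a =
        (if ∃ i, i < h ∧ t i ≤ a ∧ a < s i then 3 else if s0 ≤ a ∧ a < t0 then 1 else 0) := by
      rw [cc_rt_pcount, hWdef]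
      exact cnt a h s t s0 t0 hh hrl hsep hfirst hlast
    have hL : 0 < π'.length := List.length_pos_iff.mpr hne'
    have hhead'' : π'[0]? = some s0 := by rw [← List.head?_eq_getElem?]; exact hhead'
    obtain ⟨-, h0'⟩ := getbang hhead''
    have hlast'' : π'[π'.length - 1]? = some t0 := by
      rw [← List.getLast?_eq_getElem?]; exact hlast2
    obtain ⟨-, hE'⟩ := getbang hlast''
    have hle : cc (rideThrough W) a ≤ cc π' a := by
      rw [hccπ]
      split_ifs with hA hB
      · obtain ⟨i, hi, hA1, hA2⟩ := hA
        have hreq : Satisfies π' (s i) (t i) :=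
          hsatC' (s i, t i) (Finset.mem_image.mpr ⟨i, Finset.mem_range.mpr hi, rfl⟩)
        obtain ⟨p, q, hpq, hp, hq⟩ := hreq
        obtain ⟨hplen, hpv⟩ := getbang hp
        obtain ⟨hqlen, hqv⟩ := getbang hq
        have ha1 : π'[0]! ≤ a := by
          rw [h0']; exact le_trans hfirst (le_trans (hf1 i hi) hA1)
        have ha2 : a < π'[p]! := by rw [hpv]; exact hA2
        have ha3 : π'[q]! ≤ a := by rw [hqv]; exact hA1
        have ha4 : a < π'[π'.length - 1]! := by
          rw [hE']; exact lt_of_lt_of_le hA2 (hf3 i hi)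
        obtain ⟨k1, hk11, hk12, hk13, hk14⟩ :=
          cross_up n π' hchain' a p 0 p (by omega) (by omega) hplen ha1 ha2
        obtain ⟨k2, hk21, hk22, hk23, hk24⟩ :=
          cross_down n π' hchain' a (q - p) p q (by omega) hpq hqlen ha2 ha3
        obtain ⟨k3, hk31, hk32, hk33, hk34⟩ :=
          cross_up n π' hchain' a (π'.length - 1 - q) q (π'.length - 1)
            (by omega) (by omega) (by omega) ha3 ha4
        have hcard : ({k1, k2, k3} : Finset ℕ).card = 3 := by
          rw [Finset.card_insert_of_notMem (by simp; omega),
            Finset.card_insert_of_notMem (by simp; omega), Finset.card_singleton]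
        calc (3 : ℕ) = ({k1, k2, k3} : Finset ℕ).card := hcard.symm
        _ ≤ cc π' a := by
            apply cc_ge
            intro k hk
            simp only [Finset.mem_insert, Finset.mem_singleton] at hk
            rcases hk with rfl | rfl | rfl
            · exact ⟨by omega, by rw [eind, if_pos (Or.inl ⟨hk13, hk14⟩)]⟩
            · exact ⟨by omega, by rw [eind, if_pos (Or.inr ⟨hk23, hk24⟩)]⟩
            · exact ⟨by omega, by rw [eind, if_pos (Or.inl ⟨hk33, hk34⟩)]⟩
      · have ha1 : π'[0]! ≤ a := by rw [h0']; exact hB.1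
        have ha4 : a < π'[π'.length - 1]! := by rw [hE']; exact hB.2
        obtain ⟨k1, hk11, hk12, hk13, hk14⟩ :=
          cross_up n π' hchain' a (π'.length - 1) 0 (π'.length - 1)
            (by omega) (by omega) (by omega) ha1 ha4
        calc (1 : ℕ) = ({k1} : Finset ℕ).card := by simp
        _ ≤ cc π' a := by
            apply cc_ge
            intro k hk
            simp only [Finset.mem_singleton] at hk
            subst hk
            exact ⟨by omega, by rw [eind, if_pos (Or.inl ⟨hk13, hk14⟩)]⟩
      · exact Nat.zero_le _
    have hw : 0 ≤ w a (a+1) := le_of_lt (hwpos a (a+1))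
    exact mul_le_mul_of_nonneg_right (by exact_mod_cast hle) hw


end RideSharing
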